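/- Let H be a complex Hilbert space, A a densely defined self-adjoint operator on H, Ω ∈ H, and 𝔖 a linear subspace of B(H) that is bounded with respect to A and Ω, i.e. XΩ ∈ D(A) for all X ∈ 𝔖 and Φ : X ↦ A(XΩ) is bounded. Then the restriction of Φ to the unit ball 𝔖₁ = {X ∈ 𝔖 : ‖X‖ ≤ 1} is continuous from the weak operator topology on B(H) to the weak topology on H; in particular, if a net (X_i) in 𝔖₁ converges to 0 in the weak operator topology, then A(X_iΩ) converges to 0 weakly in H. -/

import Mathlib

open scoped InnerProductSpace
open Filter

/-- If `𝔖 ⊆ B(H)` is a linear subspace that is bounded with respect to a densely defined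
self-adjoint operator `A` and a vector `Ω` (i.e. `XΩ ∈ D(A)` for `X ∈ 𝔖` and
`Φ : X ↦ A(XΩ)` is bounded), then `Φ` restricted to the unit ball of `𝔖` is continuous from
the weak operator topology to the weak topology: if a net `(X i)` in the unit ball of `𝔖`
converges to `0` in the weak operator topology, then `A (X i Ω)` converges weakly to `0`. -/
theorem phi_weakly_continuous_on_unit_ball
    {H : Type*} [NormedAddCommGroup H] [InnerProductSpace ℂ H] [CompleteSpace H]
    (A : H →ₗ.[ℂ] H) (hA : IsSelfAdjoint A) (hdense : Dense (A.domain : Set H))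
    (Ω : H) (𝔖 : Submodule ℂ (H →L[ℂ] H))
    (hdom : ∀ X ∈ 𝔖, X Ω ∈ A.domain)
    (hbdd : ∃ C : ℝ, ∀ X : H →L[ℂ] H, ∀ hX : X ∈ 𝔖, ‖A ⟨X Ω, hdom X hX⟩‖ ≤ C * ‖X‖)
    {ι : Type*} (l : Filter ι) (X : ι → H →L[ℂ] H)
    (hXmem : ∀ i, X i ∈ 𝔖) (hXball : ∀ i, ‖X i‖ ≤ 1)
    (hWOT : ∀ ξ η : H, Tendsto (fun i => ⟪(X i) ξ, η⟫_ℂ) l (nhds 0)) :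
    ∀ η : H, Tendsto (fun i => ⟪A ⟨X i Ω, hdom (X i) (hXmem i)⟩, η⟫_ℂ) l (nhds 0) := by
  -- symmetry of A on its domain
  rw [LinearPMap.isSelfAdjoint_def] at hA
  obtain ⟨hdomeq, hfun⟩ := LinearPMap.ext_iff.mp hA
  have hsym : ∀ (x : H) (hx : x ∈ A.domain) (y : H) (hy : y ∈ A.domain),
      ⟪A ⟨x, hx⟩, y⟫_ℂ = ⟪x, A ⟨y, hy⟩⟫_ℂ := by
    intro x hx y hy
    have hx' : x ∈ (LinearPMap.adjoint A).domain := by rw [hdomeq]; exact hx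
    have h1 : LinearPMap.adjoint A ⟨x, hx'⟩ = A ⟨x, hx⟩ := @hfun x hx' hx
    have h2 := LinearPMap.adjoint_isFormalAdjoint hdense
      (⟨x, hx'⟩ : (LinearPMap.adjoint A).domain) (⟨y, hy⟩ : A.domain)
    rw [h1] at h2
    exact h2
  obtain ⟨C, hC⟩ := hbdd
  set C' := max C 0 with hC'def
  have hC'nn : 0 ≤ C' := le_max_right _ _
  have hbound : ∀ i, ‖A ⟨X i Ω, hdom (X i) (hXmem i)⟩‖ ≤ C' := by
    intro i
    refine (hC (X i) (hXmem i)).trans ?_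
    rcases le_or_gt 0 C with h | h
    · calc C * ‖X i‖ ≤ C * 1 := by nlinarith [norm_nonneg (X i), hXball i]
        _ = C := mul_one C
        _ ≤ C' := le_max_left _ _
    · calc C * ‖X i‖ ≤ 0 := mul_nonpos_of_nonpos_of_nonneg h.le (norm_nonneg _)
        _ ≤ C' := hC'nn
  intro η
  rw [Metric.tendsto_nhds]
  intro ε hε
  have hδ : 0 < ε / (2 * (C' + 1)) := by positivity
  obtain ⟨η', hη'mem, hη'close⟩ := Metric.mem_closure_iff.mp (hdense η) _ hδ
  have h1 := hWOT Ω (A ⟨η', hη'mem⟩)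
  have h1' := Metric.tendsto_nhds.mp h1 (ε / 2) (by positivity)
  filter_upwards [h1'] with i hi
  set y := A ⟨X i Ω, hdom (X i) (hXmem i)⟩ with hy
  have hsplit : ⟪y, η⟫_ℂ = ⟪y, η'⟫_ℂ + ⟪y, η - η'⟫_ℂ := by
    rw [← inner_add_right]
    congr 1
    abel
  have hterm1 : ‖⟪y, η'⟫_ℂ‖ < ε / 2 := by
    have heq : ⟪y, η'⟫_ℂ = ⟪X i Ω, A ⟨η', hη'mem⟩⟫_ℂ :=
      hsym (X i Ω) (hdom (X i) (hXmem i)) η' hη'mem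
    rw [heq]
    simpa [dist_eq_norm] using hi
  have hterm2 : ‖⟪y, η - η'⟫_ℂ‖ ≤ ε / 2 := by
    have h2 : ‖⟪y, η - η'⟫_ℂ‖ ≤ ‖y‖ * ‖η - η'‖ := norm_inner_le_norm _ _
    have h3 : ‖η - η'‖ ≤ ε / (2 * (C' + 1)) := by
      rw [← dist_eq_norm]; exact hη'close.le
    calc ‖⟪y, η - η'⟫_ℂ‖ ≤ ‖y‖ * ‖η - η'‖ := h2
      _ ≤ C' * (ε / (2 * (C' + 1))) := by
          apply mul_le_mul (hbound i) h3 (norm_nonneg _) hC'nn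
      _ ≤ ε / 2 := by
          rw [mul_div_assoc', div_le_div_iff₀ (by positivity) (by norm_num)]
          nlinarith [hε.le, hC'nn]
  calc dist ⟪y, η⟫_ℂ 0 = ‖⟪y, η⟫_ℂ‖ := dist_zero_right _
    _ ≤ ‖⟪y, η'⟫_ℂ‖ + ‖⟪y, η - η'⟫_ℂ‖ := by rw [hsplit]; exact norm_add_le _ _
    _ < ε / 2 + ε / 2 := by
        have := hterm2
        linarith
    _ = ε := by ring
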